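/- For every d ≥ 3, every harmonic noncommutative polynomial in two variables x_1, x_2 that is homogeneous of degree d is a real linear combination of Re(γ^d) and Im(γ^d), where γ = x_1 + i·x_2. Hence {Re(γ^d), Im(γ^d)} is a basis of the space of homogeneous harmonic polynomials of degree d. -/

import Mathlib

noncomputable section

/-- Variables: `some i` is `xᵢ`, `none` is the direction variable `h`. -/
abbrev Var (g : ℕ) := Option (Fin g)

/-- Noncommutative polynomials `ℝ⟨x₁,…,x_g,h⟩`. -/
abbrev NC (g : ℕ) := MonoidAlgebra ℝ (FreeMonoid (Var g))

/-- The monomial corresponding to a word. -/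
def mono (g : ℕ) (w : List (Var g)) : NC g :=
  MonoidAlgebra.of ℝ (FreeMonoid (Var g)) (FreeMonoid.ofList w)

/-- The generator `xᵢ`. -/
def Xv (g : ℕ) (i : Fin g) : NC g := mono g [some i]

/-- The direction variable `h`. -/
def Hv (g : ℕ) : NC g := mono g [none]

/-- Directional derivative of a word in `xᵢ` in direction `h`: sum of the
terms obtained by replacing one occurrence of `xᵢ` by `h`. -/
def wordD (g : ℕ) (i : Fin g) : List (Var g) → NC g
  | [] => 0
  | a :: w =>
      (if a = some i then mono g (none :: w) else 0) + mono g [a] * wordD g i w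

/-- Directional derivative `D[p, xᵢ, h]`, extended linearly from words. -/
def D (g : ℕ) (i : Fin g) (p : NC g) : NC g :=
  Finsupp.sum p.coeff fun w c => c • wordD g i (FreeMonoid.toList w)

/-- The noncommutative Laplacian `Lap[p,h] := ∑ᵢ D[D[p,xᵢ,h],xᵢ,h]`. -/
def Lap (g : ℕ) (p : NC g) : NC g := ∑ i : Fin g, D g i (D g i p)

/-- The transpose: linear anti-automorphism reversing words and fixing generators. -/
def transp (g : ℕ) (p : NC g) : NC g :=
  MonoidAlgebra.ofCoeff (Finsupp.mapDomain (fun w => FreeMonoid.ofList (FreeMonoid.toList w).reverse) p.coeff)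

/-- Evaluation of a polynomial at a tuple of matrices (one for each variable). -/
def eval (g n : ℕ) (M : Var g → Matrix (Fin n) (Fin n) ℝ) (p : NC g) :
    Matrix (Fin n) (Fin n) ℝ :=
  Finsupp.sum p.coeff fun w c => c • ((FreeMonoid.toList w).map M).prod

/-- `p` is a polynomial in `x₁,…,x_g` only (the variable `h` does not occur). -/
def NoH (g : ℕ) (p : NC g) : Prop :=
  ∀ w ∈ p.coeff.support, none ∉ FreeMonoid.toList w

/-- `p` is a homogeneous polynomial of degree `d` in the variables `x₁,…,x_g`. -/
def HomogX (g : ℕ) (d : ℕ) (p : NC g) : Prop :=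
  ∀ w ∈ p.coeff.support, none ∉ FreeMonoid.toList w ∧ (FreeMonoid.toList w).length = d


/-- Complex noncommutative polynomials `ℂ⟨x₁,x₂,h⟩`. -/
abbrev NCC := MonoidAlgebra ℂ (FreeMonoid (Var 2))

def XC (i : Fin 2) : NCC := MonoidAlgebra.of ℂ (FreeMonoid (Var 2)) (FreeMonoid.ofList [some i])

/-- `γ = x₁ + i x₂`. -/
def gam : NCC := XC 0 + Complex.I • XC 1

/-- Coefficientwise real part. -/
def rePart (p : NCC) : NC 2 := MonoidAlgebra.ofCoeff (Finsupp.mapRange Complex.re Complex.zero_re p.coeff)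

/-- Coefficientwise imaginary part. -/
def imPart (p : NCC) : NC 2 := MonoidAlgebra.ofCoeff (Finsupp.mapRange Complex.im Complex.zero_im p.coeff)

/-- Complex-linear transpose, reversing monomials. -/
def transpC (p : NCC) : NCC :=
  MonoidAlgebra.ofCoeff (Finsupp.mapDomain (fun w => FreeMonoid.ofList (FreeMonoid.toList w).reverse) p.coeff)

/-- word from a function -/
def wd {d : ℕ} (u : Fin d → Var 2) : FreeMonoid (Var 2) :=
  FreeMonoid.ofList (List.ofFn u)

def wrd {d : ℕ} (v : Fin d → Fin 2) : FreeMonoid (Var 2) := wd (fun p => some (v p))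

def cnt {d : ℕ} (v : Fin d → Fin 2) : ℕ := ∑ p, (v p : ℕ)

lemma wd_inj {d : ℕ} : Function.Injective (@wd d) := by
  intro u u' h
  have := congrArg FreeMonoid.toList h
  simpa [wd, List.ofFn_inj] using this

lemma wrd_inj {d : ℕ} : Function.Injective (@wrd d) := by
  intro v v' h
  have := wd_inj h
  funext p
  have := congrFun this p
  simpa using this

lemma gam_pow (d : ℕ) :
    gam ^ d = ∑ v : Fin d → Fin 2, MonoidAlgebra.single (wrd v) (Complex.I ^ (cnt v)) := by
  induction d with
  | zero =>
      simp [cnt, wrd, wd]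
      rfl
  | succ d ih =>
      have hgam : gam = ∑ j : Fin 2, MonoidAlgebra.single (FreeMonoid.ofList [some j]) (Complex.I ^ (j:ℕ)) := by
        simp [gam, Fin.sum_univ_two, XC, MonoidAlgebra.of_apply, MonoidAlgebra.smul_single]
      rw [pow_succ', ih, hgam, Finset.sum_mul_sum]
      have := Equiv.sum_comp (Fin.consEquiv (fun _ : Fin (d+1) => Fin 2))
        (fun v => MonoidAlgebra.single (wrd v) (Complex.I ^ (cnt v)))
      rw [← this, Fintype.sum_prod_type]
      refine Finset.sum_congr rfl fun j _ => Finset.sum_congr rfl fun v _ => ?_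
      rw [MonoidAlgebra.single_mul_single]
      congr 1
      · show FreeMonoid.ofList [some j] * wrd v = wrd (Fin.cons j v)
        simp only [wrd, wd]
        rw [← FreeMonoid.ofList_append]
        congr 1
        simp [List.ofFn_succ, Fin.cons]
      · rw [← pow_add]
        congr 1
        simp [cnt, Fin.sum_univ_succ]


lemma mono_single (w : List (Var 2)) : mono 2 w = MonoidAlgebra.single (FreeMonoid.ofList w) (1:ℝ) := rfl

lemma comp_succ_update {d : ℕ} (u : Fin (d+1) → Var 2) (b : Fin d) (x : Var 2) :
    (fun a : Fin d => Function.update u b.succ x a.succ)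
      = Function.update (fun a : Fin d => u a.succ) b x := by
  funext a
  rcases eq_or_ne a b with rfl|h
  · simp
  · simp [Function.update_apply, h, Fin.succ_inj, if_neg h]

lemma ofFn_update_zero {d : ℕ} (u : Fin (d+1) → Var 2) (x : Var 2) :
    List.ofFn (Function.update u 0 x) = x :: List.ofFn (fun a => u a.succ) := by
  have : Function.update u 0 x = Fin.cons x (fun a => u a.succ) := by
    funext p
    induction p using Fin.cases with
    | zero => simp
    | succ a => simp [Function.update_apply, Fin.succ_ne_zero a]
  rw [this, List.ofFn_succ]
  simp

lemma ofFn_update_succ {d : ℕ} (u : Fin (d+1) → Var 2) (b : Fin d) (x : Var 2) :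
    List.ofFn (Function.update u b.succ x)
      = u 0 :: List.ofFn (Function.update (fun a => u a.succ) b x) := by
  rw [List.ofFn_succ, comp_succ_update, Function.update_of_ne (Fin.succ_ne_zero b).symm]

lemma wordD_ofFn {d : ℕ} (i : Fin 2) (u : Fin d → Var 2) :
    wordD 2 i (List.ofFn u) =
      ∑ a : Fin d, if u a = some i
        then MonoidAlgebra.single (wd (Function.update u a none)) (1:ℝ) else 0 := by
  induction d with
  | zero => simp [wordD, List.ofFn_zero]
  | succ d ih =>
    rw [List.ofFn_succ]
    simp only [wordD]
    rw [Fin.sum_univ_succ]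
    congr 1
    · rcases eq_or_ne (u 0) (some i) with h|h
      · rw [if_pos h, if_pos h, mono_single]
        congr 1
        show FreeMonoid.ofList _ = wd _
        unfold wd
        rw [ofFn_update_zero]
      · rw [if_neg h, if_neg h]
    · rw [ih (fun a => u a.succ), Finset.mul_sum]
      refine Finset.sum_congr rfl fun b _ => ?_
      rcases eq_or_ne (u b.succ) (some i) with h|h
      · rw [if_pos h, if_pos h, mono_single, MonoidAlgebra.single_mul_single, one_mul]
        congr 1
        show FreeMonoid.ofList [u 0] * wd _ = wd _
        unfold wd
        rw [← FreeMonoid.ofList_append, ofFn_update_succ]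
        rfl
      · rw [if_neg h, if_neg h, mul_zero]

lemma D_single (i : Fin 2) (w : FreeMonoid (Var 2)) (c : ℝ) :
    D 2 i (MonoidAlgebra.single w c) = c • wordD 2 i (FreeMonoid.toList w) := by
  unfold D
  rw [MonoidAlgebra.coeff_single, Finsupp.sum_single_index]
  simp

lemma D_zero (i : Fin 2) : D 2 i 0 = 0 := by unfold D; simp

lemma D_add (i : Fin 2) (p q : NC 2) : D 2 i (p + q) = D 2 i p + D 2 i q := by
  unfold D
  rw [MonoidAlgebra.coeff_add, Finsupp.sum_add_index']
  · intro w; simp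
  · intro w c c'; rw [add_smul]

lemma D_smul (i : Fin 2) (c : ℝ) (p : NC 2) : D 2 i (c • p) = c • D 2 i p := by
  unfold D
  rw [MonoidAlgebra.coeff_smul, Finsupp.sum_smul_index', Finsupp.smul_sum]
  · simp [mul_smul]
  · intro w; simp

lemma D_finsum {ι : Type*} (s : Finset ι) (i : Fin 2) (f : ι → NC 2) :
    D 2 i (∑ x ∈ s, f x) = ∑ x ∈ s, D 2 i (f x) := by
  classical
  induction s using Finset.induction with
  | empty => simp [D_zero]
  | insert _ _ h ih => rw [Finset.sum_insert h, Finset.sum_insert h, D_add, ih]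

lemma Lap_finsum {ι : Type*} (s : Finset ι) (f : ι → NC 2) :
    Lap 2 (∑ x ∈ s, f x) = ∑ x ∈ s, Lap 2 (f x) := by
  unfold Lap
  rw [Finset.sum_comm]
  refine Finset.sum_congr rfl fun i _ => ?_
  rw [D_finsum, D_finsum]

lemma Lap_smul (c : ℝ) (p : NC 2) : Lap 2 (c • p) = c • Lap 2 p := by
  unfold Lap
  rw [Finset.smul_sum]
  exact Finset.sum_congr rfl fun i _ => by rw [D_smul, D_smul]


def upd2 {d : ℕ} (u : Fin d → Fin 2) (a b : Fin d) (i : Fin 2) : Fin d → Fin 2 :=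
  Function.update (Function.update u a i) b i

lemma upd2_apply {d : ℕ} (u : Fin d → Fin 2) (a b c : Fin d) (i : Fin 2) :
    upd2 u a b i c = if c = b then i else if c = a then i else u c := by
  unfold upd2; simp [Function.update_apply]

lemma updnone_apply {d : ℕ} (f : Fin d → Var 2) (a b c : Fin d) :
    Function.update (Function.update f a none) b none c
      = if c = b then none else if c = a then none else f c := by
  simp [Function.update_apply]

lemma exists_wrd {d : ℕ} (w : FreeMonoid (Var 2))
    (h1 : none ∉ FreeMonoid.toList w) (h2 : (FreeMonoid.toList w).length = d) :
    ∃ v : Fin d → Fin 2, w = wrd v := by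
  have hs : ∀ p : Fin d, (FreeMonoid.toList w).get (Fin.cast h2.symm p) ≠ none := by
    intro p hn
    exact h1 (hn ▸ List.get_mem _ _)
  refine ⟨fun p => ((FreeMonoid.toList w).get (Fin.cast h2.symm p)).get
    (Option.isSome_iff_ne_none.mpr (hs p)), ?_⟩
  have h3 : FreeMonoid.toList w = List.ofFn
      (fun p : Fin d => some ((((FreeMonoid.toList w).get (Fin.cast h2.symm p))).get
        (Option.isSome_iff_ne_none.mpr (hs p)))) := by
    apply List.ext_getElem
    · simp [h2]
    · intro n hn1 hn2
      simp only [List.getElem_ofFn]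
      rw [Option.some_get]
      rfl
  conv_lhs => rw [← FreeMonoid.ofList_toList w, h3]
  rfl

lemma decomp {d : ℕ} (p : NC 2) (hp : HomogX 2 d p) :
    p = ∑ v : Fin d → Fin 2, MonoidAlgebra.single (wrd v) (p.coeff (wrd v)) := by
  classical
  ext t
  rw [MonoidAlgebra.coeff_sum, Finsupp.finset_sum_apply]
  by_cases ht : ∃ v : Fin d → Fin 2, t = wrd v
  · obtain ⟨v₀, rfl⟩ := ht
    have h4 : ∀ v : Fin d → Fin 2, (MonoidAlgebra.single (wrd v) (p.coeff (wrd v))).coeff (wrd v₀)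
        = if v = v₀ then p.coeff (wrd v) else 0 := by
      intro v
      rw [MonoidAlgebra.coeff_single, Finsupp.single_apply]
      congr 1
      simp only [eq_iff_iff]
      exact ⟨fun h => wrd_inj h, fun h => by rw [h]⟩
    simp only [h4]
    rw [Finset.sum_ite_eq' Finset.univ v₀ (fun v => p.coeff (wrd v))]
    simp
  · have hpt : p.coeff t = 0 := by
      by_contra h
      have hmem : t ∈ p.coeff.support := Finsupp.mem_support_iff.mpr h
      obtain ⟨hn, hl⟩ := hp t hmem
      exact ht (exists_wrd t hn hl)
    rw [hpt]
    symm
    apply Finset.sum_eq_zero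
    intro v _
    rw [MonoidAlgebra.coeff_single, Finsupp.single_apply, if_neg]
    intro h
    exact ht ⟨v, h.symm⟩

lemma cond_iff {d : ℕ} (v u : Fin d → Fin 2) (a₀ b₀ a b : Fin d) (hab : a₀ ≠ b₀) (i : Fin 2) :
    ((fun p => some (v p) : Fin d → Var 2) a = some i ∧
      Function.update (fun p => some (v p) : Fin d → Var 2) a none b = some i ∧
      Function.update (Function.update (fun p => some (v p) : Fin d → Var 2) a none) b none
        = Function.update (Function.update (fun p => some (u p) : Fin d → Var 2) a₀ none) b₀ none)
    ↔ (v = upd2 u a₀ b₀ i ∧ ((a = a₀ ∧ b = b₀) ∨ (a = b₀ ∧ b = a₀))) := by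
  constructor
  · rintro ⟨h1, h2, h3⟩
    have hva : v a = i := by simpa using h1
    have hba : b ≠ a := by
      intro h; rw [h] at h2; simp at h2
    have hvb : v b = i := by
      rw [Function.update_apply, if_neg hba] at h2; simpa using h2
    have hF := fun c => congrFun h3 c
    have ha' : a = a₀ ∨ a = b₀ := by
      by_contra hc
      push_neg at hc
      have := hF a
      rw [updnone_apply, updnone_apply] at this
      rcases eq_or_ne a b with h|h
      · exact hba h.symm
      · simp [h, hc.1, hc.2] at this
    have hb' : b = a₀ ∨ b = b₀ := by
      by_contra hc
      push_neg at hc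
      have := hF b
      rw [updnone_apply, updnone_apply] at this
      simp [hc.1, hc.2] at this
    have hpair : (a = a₀ ∧ b = b₀) ∨ (a = b₀ ∧ b = a₀) := by
      rcases ha' with h|h <;> rcases hb' with h'|h'
      · exact absurd (h'.trans h.symm) hba
      · exact Or.inl ⟨h, h'⟩
      · exact Or.inr ⟨h, h'⟩
      · exact absurd (h'.trans h.symm) hba
    refine ⟨funext fun c => ?_, hpair⟩
    rw [upd2_apply]
    rcases eq_or_ne c b₀ with rfl|hc1
    · rw [if_pos rfl]
      rcases hpair with ⟨h,h'⟩|⟨h,h'⟩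
      · rw [← h']; exact hvb
      · rw [← h]; exact hva
    · rw [if_neg hc1]
      rcases eq_or_ne c a₀ with rfl|hc2
      · rw [if_pos rfl]
        rcases hpair with ⟨h,h'⟩|⟨h,h'⟩
        · rw [← h]; exact hva
        · rw [← h']; exact hvb
      · rw [if_neg hc2]
        have hca : c ≠ a := by
          rcases hpair with ⟨h,h'⟩|⟨h,h'⟩ <;> subst h
          · exact hc2
          · exact hc1
        have hcb : c ≠ b := by
          rcases hpair with ⟨h,h'⟩|⟨h,h'⟩ <;> subst h'
          · exact hc1
          · exact hc2
        have := hF c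
        rw [updnone_apply, updnone_apply, if_neg hcb, if_neg hca, if_neg hc1, if_neg hc2] at this
        exact Option.some_injective _ this
  · rintro ⟨rfl, hpair⟩
    rcases hpair with ⟨rfl,rfl⟩|⟨rfl,rfl⟩
    · refine ⟨?_, ?_, ?_⟩
      · simp [upd2_apply, hab]
      · simp [Function.update_apply, upd2_apply, hab, Ne.symm hab]
      · funext c
        rw [updnone_apply, updnone_apply]
        by_cases hc1 : c = a <;> by_cases hc2 : c = b <;> simp [hc1, hc2, upd2_apply]
    · refine ⟨?_, ?_, ?_⟩
      · simp [upd2_apply]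
      · simp [Function.update_apply, upd2_apply, hab, Ne.symm hab]
      · funext c
        rw [updnone_apply, updnone_apply]
        by_cases hc1 : c = a <;> by_cases hc2 : c = b <;> simp [hc1, hc2, upd2_apply]


lemma ite_ite {c c' : Prop} [Decidable c] [Decidable c'] (x : ℝ) :
    (if c then (if c' then x else 0) else 0) = if c ∧ c' then x else 0 := by
  split_ifs <;> tauto

lemma sum_pair_ite {d : ℕ} (a₀ b₀ : Fin d) (h : a₀ ≠ b₀) :
    (∑ a : Fin d, ∑ b : Fin d,
      if ((a = a₀ ∧ b = b₀) ∨ (a = b₀ ∧ b = a₀)) then (1:ℝ) else 0) = 2 := by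
  have hsplit : ∀ a b : Fin d,
      (if ((a = a₀ ∧ b = b₀) ∨ (a = b₀ ∧ b = a₀)) then (1:ℝ) else 0)
        = (if a = a₀ then (if b = b₀ then (1:ℝ) else 0) else 0)
          + (if a = b₀ then (if b = a₀ then (1:ℝ) else 0) else 0) := by
    intro a b
    by_cases h1 : a = a₀ <;> by_cases h2 : b = b₀ <;>
      by_cases h3 : a = b₀ <;> by_cases h4 : b = a₀ <;> simp_all
  have hsplit2 : ∀ a b : Fin d,
      (if ((a = a₀ ∧ b = b₀) ∨ (a = b₀ ∧ b = a₀)) then (1:ℝ) else 0)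
        = (if a = a₀ then (1:ℝ) else 0) * (if b = b₀ then (1:ℝ) else 0)
          + (if a = b₀ then (1:ℝ) else 0) * (if b = a₀ then (1:ℝ) else 0) := by
    intro a b
    rw [hsplit]
    by_cases h1 : a = a₀ <;> by_cases h2 : b = b₀ <;>
      by_cases h3 : a = b₀ <;> by_cases h4 : b = a₀ <;> simp_all
  simp only [hsplit2, Finset.sum_add_distrib]
  rw [← Finset.sum_mul_sum, ← Finset.sum_mul_sum]
  simp [Finset.sum_ite_eq']
  norm_num

lemma D_D_single {d : ℕ} (i : Fin 2) (v : Fin d → Fin 2) :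
    D 2 i (D 2 i (MonoidAlgebra.single (wrd v) (1:ℝ)))
      = ∑ a : Fin d, ∑ b : Fin d,
          if ((fun p => some (v p) : Fin d → Var 2) a = some i ∧
              Function.update (fun p => some (v p) : Fin d → Var 2) a none b = some i)
          then MonoidAlgebra.single
            (wd (Function.update (Function.update
              (fun p => some (v p) : Fin d → Var 2) a none) b none)) (1:ℝ)
          else 0 := by
  have hD : ∀ (f : Fin d → Var 2), D 2 i (MonoidAlgebra.single (wd f) (1:ℝ))
      = ∑ a : Fin d, if f a = some i
          then MonoidAlgebra.single (wd (Function.update f a none)) (1:ℝ) else 0 := by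
    intro f
    rw [D_single, one_smul]
    have : FreeMonoid.toList (wd f) = List.ofFn f := rfl
    rw [this, wordD_ofFn]
  have h1 : (MonoidAlgebra.single (wrd v) (1:ℝ)) = MonoidAlgebra.single (wd (fun p => some (v p))) 1 := rfl
  rw [h1, hD, D_finsum]
  refine Finset.sum_congr rfl fun a _ => ?_
  by_cases hc : (fun p => some (v p) : Fin d → Var 2) a = some i
  · rw [if_pos hc, hD]
    refine Finset.sum_congr rfl fun b _ => ?_
    by_cases hc2 : Function.update (fun p => some (v p) : Fin d → Var 2) a none b = some i
    · rw [if_pos hc2, if_pos ⟨hc, hc2⟩]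
    · rw [if_neg hc2, if_neg (fun h => hc2 h.2)]
  · rw [if_neg hc, D_zero]
    symm
    apply Finset.sum_eq_zero
    intro b _
    rw [if_neg (fun h => hc h.1)]

lemma lap_single_apply {d : ℕ} (v u : Fin d → Fin 2) (a₀ b₀ : Fin d) (hab : a₀ ≠ b₀) :
    (Lap 2 (MonoidAlgebra.single (wrd v) (1:ℝ))).coeff
      (wd (Function.update (Function.update (fun p => some (u p)) a₀ none) b₀ none))
    = (if v = upd2 u a₀ b₀ 0 then 2 else 0) + (if v = upd2 u a₀ b₀ 1 then 2 else 0) := by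
  classical
  set T := wd (Function.update (Function.update (fun p => some (u p) : Fin d → Var 2) a₀ none) b₀ none) with hT
  unfold Lap
  rw [MonoidAlgebra.coeff_sum, Finsupp.finset_sum_apply]
  have hterm : ∀ i : Fin 2, (D 2 i (D 2 i (MonoidAlgebra.single (wrd v) (1:ℝ)))).coeff T
      = if v = upd2 u a₀ b₀ i then (2:ℝ) else 0 := by
    intro i
    rw [D_D_single, MonoidAlgebra.coeff_sum, Finsupp.finset_sum_apply]
    have hsum : ∀ a : Fin d, (∑ b : Fin d,
        if ((fun p => some (v p) : Fin d → Var 2) a = some i ∧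
            Function.update (fun p => some (v p) : Fin d → Var 2) a none b = some i)
        then MonoidAlgebra.single (wd (Function.update (Function.update
            (fun p => some (v p) : Fin d → Var 2) a none) b none)) (1:ℝ)
        else 0).coeff T
        = ∑ b : Fin d,
          if (v = upd2 u a₀ b₀ i ∧ ((a = a₀ ∧ b = b₀) ∨ (a = b₀ ∧ b = a₀)))
          then (1:ℝ) else 0 := by
      intro a
      rw [MonoidAlgebra.coeff_sum, Finsupp.finset_sum_apply]
      refine Finset.sum_congr rfl fun b _ => ?_
      by_cases hq : (v = upd2 u a₀ b₀ i ∧ ((a = a₀ ∧ b = b₀) ∨ (a = b₀ ∧ b = a₀)))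
      · obtain ⟨h1, h2, h3⟩ := (cond_iff v u a₀ b₀ a b hab i).mpr hq
        rw [if_pos ⟨h1, h2⟩, MonoidAlgebra.coeff_single, Finsupp.single_apply,
          if_pos (show _ = T by rw [hT]; exact congrArg wd h3), if_pos hq]
      · rw [if_neg hq]
        by_cases hc1 : ((fun p => some (v p) : Fin d → Var 2) a = some i ∧
            Function.update (fun p => some (v p) : Fin d → Var 2) a none b = some i)
        · rw [if_pos hc1, MonoidAlgebra.coeff_single, Finsupp.single_apply, if_neg]
          intro h
          rw [hT] at h
          exact hq ((cond_iff v u a₀ b₀ a b hab i).mp ⟨hc1.1, hc1.2, wd_inj h⟩)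
        · rw [if_neg hc1]
          rfl
    simp only [hsum]
    by_cases hv : v = upd2 u a₀ b₀ i
    · rw [if_pos hv]
      have hpt : ∀ a b : Fin d,
          (if (v = upd2 u a₀ b₀ i ∧ ((a = a₀ ∧ b = b₀) ∨ (a = b₀ ∧ b = a₀))) then (1:ℝ) else 0)
            = if ((a = a₀ ∧ b = b₀) ∨ (a = b₀ ∧ b = a₀)) then (1:ℝ) else 0 := by
        intro a b
        simp [hv]
      simp only [hpt]
      exact sum_pair_ite a₀ b₀ hab
    · rw [if_neg hv]
      apply Finset.sum_eq_zero
      intro a _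
      apply Finset.sum_eq_zero
      intro b _
      rw [if_neg (fun h => hv h.1)]
  rw [Fin.sum_univ_two] at *
  rw [hterm 0, hterm 1]


lemma key_rel {d : ℕ} (p : NC 2) (hp : HomogX 2 d p) (hl : Lap 2 p = 0)
    (u : Fin d → Fin 2) (a₀ b₀ : Fin d) (hab : a₀ ≠ b₀) :
    p.coeff (wrd (upd2 u a₀ b₀ 0)) + p.coeff (wrd (upd2 u a₀ b₀ 1)) = 0 := by
  classical
  set T := wd (Function.update (Function.update (fun p => some (u p) : Fin d → Var 2) a₀ none) b₀ none) with hT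
  have hlap : Lap 2 p = ∑ v : Fin d → Fin 2, p.coeff (wrd v) • Lap 2 (MonoidAlgebra.single (wrd v) (1:ℝ)) := by
    conv_lhs => rw [decomp p hp]
    rw [Lap_finsum]
    refine Finset.sum_congr rfl fun v _ => ?_
    rw [← Lap_smul]
    congr 1
    rw [MonoidAlgebra.smul_single, smul_eq_mul, mul_one]
  have h0 : (Lap 2 p).coeff T = 0 := by rw [hl]; rfl
  rw [hlap, MonoidAlgebra.coeff_sum, Finsupp.finset_sum_apply] at h0
  have hterm : ∀ v : Fin d → Fin 2,
      (p.coeff (wrd v) • Lap 2 (MonoidAlgebra.single (wrd v) (1:ℝ))).coeff T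
        = (if v = upd2 u a₀ b₀ 0 then 2 * p.coeff (wrd v) else 0)
          + (if v = upd2 u a₀ b₀ 1 then 2 * p.coeff (wrd v) else 0) := by
    intro v
    rw [MonoidAlgebra.coeff_smul, Finsupp.smul_apply, lap_single_apply v u a₀ b₀ hab, smul_add]
    congr 1 <;> (split_ifs <;> simp [mul_comm])
  simp only [hterm, Finset.sum_add_distrib] at h0
  rw [Finset.sum_ite_eq' Finset.univ (upd2 u a₀ b₀ 0)
      (fun v => 2 * p.coeff (wrd v)),
    Finset.sum_ite_eq' Finset.univ (upd2 u a₀ b₀ 1)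
      (fun v => 2 * p.coeff (wrd v))] at h0
  simp only [Finset.mem_univ, if_pos] at h0
  linarith


lemma fin2 : ∀ x : Fin 2, x = 0 ∨ x = 1 := by decide

lemma cast_update {d : ℕ} (g : Fin d → Fin 2) (a : Fin d) (x : Fin 2) :
    (fun q => ((Function.update g a x q : Fin 2) : ℕ))
      = Function.update (fun q => ((g q : Fin 2) : ℕ)) a (x : ℕ) := by
  funext q
  rcases eq_or_ne q a with rfl|h
  · simp
  · simp [Function.update_apply, h]

lemma cnt_zero {d : ℕ} {v : Fin d → Fin 2} (h : cnt v = 0) : v = fun _ => 0 := by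
  funext q
  have := Finset.sum_eq_zero_iff.mp h q (Finset.mem_univ q)
  rcases fin2 (v q) with h'|h'
  · exact h'
  · rw [h'] at this; simp at this

lemma cnt_card {d : ℕ} (v : Fin d → Fin 2) :
    cnt v = (Finset.univ.filter (fun p => v p = 1)).card := by
  rw [Finset.card_filter]
  unfold cnt
  refine Finset.sum_congr rfl fun q _ => ?_
  rcases fin2 (v q) with h'|h' <;> rw [h'] <;> simp

lemma cnt_one {d : ℕ} {v : Fin d → Fin 2} (h : cnt v = 1) :
    ∃ q, v = Function.update (fun _ => 0) q 1 := by
  rw [cnt_card] at h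
  obtain ⟨q, hq⟩ := Finset.card_eq_one.mp h
  refine ⟨q, funext fun c => ?_⟩
  rcases eq_or_ne c q with rfl|hc
  · have : c ∈ Finset.univ.filter (fun p => v p = 1) := hq ▸ Finset.mem_singleton_self c
    simp only [Finset.mem_filter] at this
    rw [this.2]
    simp
  · have : c ∉ Finset.univ.filter (fun p => v p = 1) := by
      rw [hq]; simp [hc]
    simp only [Finset.mem_filter, Finset.mem_univ, true_and] at this
    rcases fin2 (v c) with h'|h'
    · rw [h', Function.update_apply, if_neg hc]
    · exact absurd h' this
  
lemma cnt_two {d : ℕ} {v : Fin d → Fin 2} (h : 2 ≤ cnt v) :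
    ∃ s t, s ≠ t ∧ v s = 1 ∧ v t = 1 := by
  rw [cnt_card] at h
  obtain ⟨s, hs, t, ht, hst⟩ := Finset.one_lt_card.mp
    (show 1 < (Finset.univ.filter (fun p => v p = 1)).card by omega)
  simp only [Finset.mem_filter] at hs ht
  exact ⟨s, t, hst, hs.2, ht.2⟩

lemma cnt_upd2 {d : ℕ} (v : Fin d → Fin 2) (s t : Fin d) (hst : s ≠ t) (j : Fin 2) :
    cnt (upd2 v s t j) = 2 * (j : ℕ) + ∑ q ∈ (Finset.univ \ {t}) \ {s}, ((v q : ℕ)) := by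
  unfold cnt upd2
  have h1 : (fun q => ((Function.update (Function.update v s j) t j q : Fin 2) : ℕ))
      = Function.update (fun q => ((Function.update v s j q : Fin 2) : ℕ)) t (j : ℕ) :=
    cast_update _ t j
  calc ∑ q : Fin d, ((Function.update (Function.update v s j) t j q : Fin 2) : ℕ)
      = ∑ q : Fin d, Function.update (fun q => ((Function.update v s j q : Fin 2) : ℕ)) t (j : ℕ) q := by
        rw [h1]
    _ = (j : ℕ) + ∑ q ∈ Finset.univ \ {t}, ((Function.update v s j q : Fin 2) : ℕ) := by
        rw [Finset.sum_update_of_mem (Finset.mem_univ t)]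
    _ = (j : ℕ) + ∑ q ∈ Finset.univ \ {t}, Function.update (fun q => ((v q : Fin 2) : ℕ)) s (j : ℕ) q := by
        rw [cast_update v s j]
    _ = (j : ℕ) + ((j : ℕ) + ∑ q ∈ (Finset.univ \ {t}) \ {s}, ((v q : Fin 2) : ℕ)) := by
        rw [Finset.sum_update_of_mem]
        simp [Finset.mem_sdiff, hst]
    _ = 2 * (j : ℕ) + ∑ q ∈ (Finset.univ \ {t}) \ {s}, ((v q : Fin 2) : ℕ) := by ring

lemma upd2_self {d : ℕ} (v : Fin d → Fin 2) (s t : Fin d) (hs : v s = 1) (ht : v t = 1) :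
    upd2 v s t 1 = v := by
  funext c
  rw [upd2_apply]
  rcases eq_or_ne c t with rfl|h1
  · rw [if_pos rfl, ht]
  · rw [if_neg h1]
    rcases eq_or_ne c s with rfl|h2
    · rw [if_pos rfl, hs]
    · rw [if_neg h2]


lemma upd2_selfj {d : ℕ} (v : Fin d → Fin 2) (s t : Fin d) (j : Fin 2)
    (hs : v s = j) (ht : v t = j) : upd2 v s t j = v := by
  funext c
  rw [upd2_apply]
  rcases eq_or_ne c t with rfl|h1
  · rw [if_pos rfl, ht]
  · rw [if_neg h1]
    rcases eq_or_ne c s with rfl|h2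
    · rw [if_pos rfl, hs]
    · rw [if_neg h2]

lemma exists_third {d : ℕ} (hd : 3 ≤ d) (q q0 : Fin d) : ∃ r, r ≠ q ∧ r ≠ q0 := by
  by_contra h
  push_neg at h
  have hsub : (Finset.univ : Finset (Fin d)) ⊆ {q, q0} := by
    intro r _
    rcases ne_or_eq r q with h1|h1
    · simp [h r h1]
    · simp [h1]
  have h1 := Finset.card_le_card hsub
  rw [Finset.card_univ, Fintype.card_fin] at h1
  have h2 : ({q, q0} : Finset (Fin d)).card ≤ 2 :=
    (Finset.card_insert_le _ _).trans (by simp)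
  omega

lemma tri_eq {d : ℕ} (q q0 r : Fin d) :
    upd2 (Function.update (fun _ => 0) q 1) q0 r 1
      = upd2 (Function.update (fun _ => 0) q0 1) q r 1 := by
  funext c
  rw [upd2_apply, upd2_apply]
  by_cases h1 : c = r <;> by_cases h2 : c = q0 <;> by_cases h3 : c = q <;>
    simp [h1, h2, h3, Function.update_apply]

lemma coeff_formula {d : ℕ} (hd : 3 ≤ d) (q0 : Fin d) (p : NC 2)
    (hp : HomogX 2 d p) (hl : Lap 2 p = 0) :
    ∀ k : ℕ, ∀ v : Fin d → Fin 2, cnt v = k →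
      p.coeff (wrd v) = p.coeff (wrd (fun _ : Fin d => 0)) * (Complex.I ^ k).re
        + p.coeff (wrd (Function.update (fun _ : Fin d => 0) q0 1)) * (Complex.I ^ k).im := by
  intro k
  induction k using Nat.strong_induction_on with
  | _ k ih =>
    intro v hv
    rcases k with _|k
    · have h0 := cnt_zero hv
      subst h0
      simp only [pow_zero, Complex.one_re, Complex.one_im, mul_one, mul_zero, add_zero]
    rcases k with _|k
    · obtain ⟨q, rfl⟩ := cnt_one hv
      simp only [pow_one, Complex.I_re, Complex.I_im, mul_zero, mul_one, zero_add]
      rcases eq_or_ne q q0 with rfl|hq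
      · rfl
      · obtain ⟨r, hr1, hr2⟩ := exists_third hd q q0
        have k1 := key_rel p hp hl (Function.update (fun _ => 0) q 1) q0 r (Ne.symm hr2)
        have k2 := key_rel p hp hl (Function.update (fun _ => 0) q0 1) q r (Ne.symm hr1)
        rw [upd2_selfj _ _ _ _ (by simp [Function.update_apply, Ne.symm hq])
          (by simp [Function.update_apply, hr1])] at k1
        rw [upd2_selfj _ _ _ _ (by simp [Function.update_apply, hq])
          (by simp [Function.update_apply, hr2])] at k2
        rw [tri_eq q q0 r] at k1
        linarith
    · obtain ⟨s, t, hst, hs, ht⟩ := cnt_two (show 2 ≤ cnt v by omega)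
      have hv1 : upd2 v s t 1 = v := upd2_selfj v s t 1 hs ht
      have hk := key_rel p hp hl v s t hst
      rw [hv1] at hk
      have e0 := cnt_upd2 v s t hst 0
      have e1 := cnt_upd2 v s t hst 1
      rw [hv1] at e1
      simp only [Fin.val_zero, Fin.val_one, mul_zero, mul_one, zero_add] at e0 e1
      have hcnt0 : cnt (upd2 v s t 0) = k := by omega
      have ihm := ih k (by omega) (upd2 v s t 0) hcnt0
      have hI : (Complex.I : ℂ) ^ (k+2) = -Complex.I ^ k := by
        rw [pow_add, Complex.I_sq, mul_neg_one]
      rw [show k+1+1 = k+2 from rfl, hI]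
      simp only [Complex.neg_re, Complex.neg_im]
      linear_combination hk - ihm


lemma cnt_e {d : ℕ} (q : Fin d) : cnt (Function.update (fun _ : Fin d => 0) q 1) = 1 := by
  unfold cnt
  rw [Finset.sum_eq_single q]
  · simp
  · intro b _ hb
    simp [Function.update_apply, hb]
  · intro hq
    exact absurd (Finset.mem_univ q) hq

lemma cnt_const_zero {d : ℕ} : cnt (fun _ : Fin d => 0) = 0 := by
  unfold cnt
  simp

lemma gam_coeff {d : ℕ} (v : Fin d → Fin 2) : (gam ^ d).coeff (wrd v) = Complex.I ^ cnt v := by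
  classical
  rw [gam_pow, MonoidAlgebra.coeff_sum, Finsupp.finset_sum_apply]
  have h : ∀ w : Fin d → Fin 2,
      (MonoidAlgebra.single (wrd w) (Complex.I ^ cnt w)).coeff (wrd v)
        = if w = v then Complex.I ^ cnt w else 0 := by
    intro w
    rw [MonoidAlgebra.coeff_single, Finsupp.single_apply]
    congr 1
    simp only [eq_iff_iff]
    exact ⟨fun h => wrd_inj h, fun h => by rw [h]⟩
  simp only [h]
  rw [Finset.sum_ite_eq' Finset.univ v]
  simp

lemma gam_coeff_zero {d : ℕ} (t : FreeMonoid (Var 2))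
    (ht : ¬∃ v : Fin d → Fin 2, t = wrd v) : (gam ^ d).coeff t = 0 := by
  classical
  rw [gam_pow, MonoidAlgebra.coeff_sum, Finsupp.finset_sum_apply]
  apply Finset.sum_eq_zero
  intro w _
  rw [MonoidAlgebra.coeff_single, Finsupp.single_apply, if_neg]
  intro h
  exact ht ⟨w, h.symm⟩

theorem harmonic_basis' (d : ℕ) (hd : 3 ≤ d) :
    (∀ p : NC 2, HomogX 2 d p → Lap 2 p = 0 →
        ∃ a b : ℝ, p = a • rePart (gam ^ d) + b • imPart (gam ^ d)) ∧
    LinearIndependent ℝ ![rePart (gam ^ d), imPart (gam ^ d)] := by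
  have hd0 : 0 < d := by omega
  have hre : ∀ t, (rePart (gam ^ d)).coeff t = ((gam ^ d).coeff t).re := fun t => Finsupp.mapRange_apply (hf := Complex.zero_re)
  have him : ∀ t, (imPart (gam ^ d)).coeff t = ((gam ^ d).coeff t).im := fun t => Finsupp.mapRange_apply (hf := Complex.zero_im)
  constructor
  · intro p hp hl
    refine ⟨p.coeff (wrd (fun _ : Fin d => 0)),
      p.coeff (wrd (Function.update (fun _ : Fin d => 0) (⟨0, hd0⟩ : Fin d) 1)), ?_⟩
    ext t
    rw [MonoidAlgebra.coeff_add, Finsupp.add_apply, MonoidAlgebra.coeff_smul, MonoidAlgebra.coeff_smul, Finsupp.smul_apply, Finsupp.smul_apply, hre, him,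
      smul_eq_mul, smul_eq_mul]
    by_cases ht : ∃ v : Fin d → Fin 2, t = wrd v
    · obtain ⟨v, rfl⟩ := ht
      rw [gam_coeff]
      exact coeff_formula hd ⟨0, hd0⟩ p hp hl (cnt v) v rfl
    · have hpt : p.coeff t = 0 := by
        by_contra h
        obtain ⟨hn, hlen⟩ := hp t (Finsupp.mem_support_iff.mpr h)
        exact ht (exists_wrd t hn hlen)
      rw [hpt, gam_coeff_zero t ht]
      simp
  · rw [linearIndependent_fin2]
    constructor
    · simp only [Matrix.cons_val_one, Matrix.head_cons, Matrix.cons_val_zero]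
      intro h
      have h1 := congrArg (fun f : NC 2 => f.coeff (wrd (Function.update (fun _ : Fin d => 0) (⟨0, hd0⟩ : Fin d) 1))) h
      rw [him, gam_coeff, cnt_e, pow_one] at h1
      simp [Complex.I_im] at h1
    · intro a
      simp only [Matrix.cons_val_one, Matrix.head_cons, Matrix.cons_val_zero]
      intro h
      have h1 := congrArg (fun f : NC 2 => f.coeff (wrd (fun _ : Fin d => 0))) h
      rw [MonoidAlgebra.coeff_smul, Finsupp.smul_apply, him, hre, gam_coeff, cnt_const_zero, pow_zero] at h1
      simp at h1


/-- for `d ≥ 3`, `{Re(γ^d), Im(γ^d)}` is a basis for the homogeneous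
harmonic polynomials of degree `d` in two variables. -/
theorem harmonic_basis (d : ℕ) (hd : 3 ≤ d) :
    (∀ p : NC 2, HomogX 2 d p → Lap 2 p = 0 →
        ∃ a b : ℝ, p = a • rePart (gam ^ d) + b • imPart (gam ^ d)) ∧
    LinearIndependent ℝ ![rePart (gam ^ d), imPart (gam ^ d)] := harmonic_basis' d hd
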